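/- Let Π be a convex set of stochastic policies and ν a probability distribution on states with ν(s) > 0 for all s. Assume the policy space is rich in the sense that E_ν(Π) = 0, and that π ∈ Π is an exact local optimum of J_ν over Π, i.e., for all π' ∈ Π, lim_{α→0}(J_ν((1-α)π+απ') - J_ν(π))/α ≤ 0. Then v_π = v_*, the optimal value function. -/

import Mathlib

open Matrix Filter Topology

section MDPdefs

variable {S A : Type*}

/-- `P` is a transition kernel: nonnegative and each row sums to one. -/
def IsKernel [Fintype S] (P : S → A → S → ℝ) : Prop :=
  ∀ s a, (∀ s', 0 ≤ P s a s') ∧ ∑ s', P s a s' = 1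

/-- A stochastic policy: a probability distribution over actions in each state. -/
def IsPolicy [Fintype A] (π : S → A → ℝ) : Prop :=
  ∀ s, (∀ a, 0 ≤ π s a) ∧ ∑ a, π s a = 1

/-- A probability distribution over states. -/
def IsDist [Fintype S] (μ : S → ℝ) : Prop :=
  (∀ s, 0 ≤ μ s) ∧ ∑ s, μ s = 1

/-- The reward vector `r_π(s) = ∑_a π(a|s) r(s,a)`. -/
def rPol [Fintype A] (r : S → A → ℝ) (π : S → A → ℝ) : S → ℝ :=
  fun s => ∑ a, π s a * r s a

/-- The stochastic matrix `P_π(s,s') = ∑_a π(a|s) P(s'|s,a)`. -/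
def PPol [Fintype A] (P : S → A → S → ℝ) (π : S → A → ℝ) : Matrix S S ℝ :=
  Matrix.of fun s s' => ∑ a, π s a * P s a s'

/-- The Bellman operator `T_π v = r_π + γ P_π v`. -/
noncomputable def bellman [Fintype S] [Fintype A] (P : S → A → S → ℝ) (r : S → A → ℝ)
    (γ : ℝ) (π : S → A → ℝ) (v : S → ℝ) : S → ℝ :=
  rPol r π + γ • (PPol P π *ᵥ v)

/-- The optimal Bellman operator `(Tv)(s) = max_a [r(s,a) + γ ∑_{s'} P(s'|s,a) v(s')]`. -/
noncomputable def optBellman [Fintype S] [Fintype A] [Nonempty A] (P : S → A → S → ℝ)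
    (r : S → A → ℝ) (γ : ℝ) (v : S → ℝ) : S → ℝ :=
  fun s => Finset.univ.sup' Finset.univ_nonempty fun a => r s a + γ * ∑ s', P s a s' * v s'

/-- The value function of policy `π`, `v_π = (I - γ P_π)⁻¹ r_π`, the unique solution of
`v = r_π + γ P_π v` when `0 ≤ γ < 1`. -/
noncomputable def valueFn [Fintype S] [Fintype A] [DecidableEq S] (P : S → A → S → ℝ)
    (r : S → A → ℝ) (γ : ℝ) (π : S → A → ℝ) : S → ℝ :=
  ((1 : Matrix S S ℝ) - γ • PPol P π)⁻¹ *ᵥ rPol r π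

/-- The γ-weighted occupancy measure `d_{μ,π} = (1-γ) μ (I - γ P_π)⁻¹` (a row vector). -/
noncomputable def occ [Fintype S] [Fintype A] [DecidableEq S] (P : S → A → S → ℝ)
    (γ : ℝ) (μ : S → ℝ) (π : S → A → ℝ) : S → ℝ :=
  (1 - γ) • (μ ᵥ* ((1 : Matrix S S ℝ) - γ • PPol P π)⁻¹)

/-- The stochastic mixture `(1-α)π + απ'`. -/
def mix (α : ℝ) (π π' : S → A → ℝ) : S → A → ℝ :=
  fun s a => (1 - α) * π s a + α * π' s a

/-- The `ν`-greedy-complexity `E_ν(Π) = sup_{ρ∈Π} inf_{ρ'∈Π} d_{ν,ρ}·(T v_ρ - T_{ρ'} v_ρ)`. -/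
noncomputable def greedyCplx [Fintype S] [Fintype A] [Nonempty A] [DecidableEq S]
    (P : S → A → S → ℝ) (r : S → A → ℝ) (γ : ℝ) (ν : S → ℝ)
    (Pol : Set (S → A → ℝ)) : ℝ :=
  ⨆ ρ : Pol, ⨅ ρ' : Pol,
    occ P γ ν (ρ : S → A → ℝ) ⬝ᵥ
      (optBellman P r γ (valueFn P r γ (ρ : S → A → ℝ)) -
        bellman P r γ (ρ' : S → A → ℝ) (valueFn P r γ (ρ : S → A → ℝ)))

/-- `π` is an `ε`-local optimum of `J_ν` over `Pol`: for every `π' ∈ Pol`, the (one-sided)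
limit of `(ν·v_{(1-α)π+απ'} - ν·v_π)/α` as `α → 0⁺` exists and is at most `ε`. -/
def IsLocalOpt [Fintype S] [Fintype A] [DecidableEq S]
    (P : S → A → S → ℝ) (r : S → A → ℝ) (γ : ℝ) (ν : S → ℝ)
    (Pol : Set (S → A → ℝ)) (π : S → A → ℝ) (ε : ℝ) : Prop :=
  ∀ π' ∈ Pol, ∃ L ≤ ε,
    Tendsto (fun α : ℝ =>
        (ν ⬝ᵥ valueFn P r γ (mix α π π') - ν ⬝ᵥ valueFn P r γ π) / α)
      (𝓝[>] 0) (𝓝 L)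

end MDPdefs


section Aux
set_option linter.unusedSectionVars false

variable {S A : Type*} [Fintype S] [Fintype A] [DecidableEq S]

/-- Rows of `PPol` are nonnegative. -/
lemma PPol_nonneg {P : S → A → S → ℝ} (hP : IsKernel P) {ρ : S → A → ℝ}
    (hρ : IsPolicy ρ) (s s' : S) : 0 ≤ PPol P ρ s s' :=
  Finset.sum_nonneg fun a _ => mul_nonneg ((hρ s).1 a) ((hP s a).1 s')

/-- Rows of `PPol` sum to one. -/
lemma PPol_rowsum {P : S → A → S → ℝ} (hP : IsKernel P) {ρ : S → A → ℝ}
    (hρ : IsPolicy ρ) (s : S) : ∑ s', PPol P ρ s s' = 1 := by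
  simp only [PPol, Matrix.of_apply]
  rw [Finset.sum_comm]
  have : ∀ a ∈ Finset.univ, ∑ s', ρ s a * P s a s' = ρ s a := by
    intro a _
    rw [← Finset.mul_sum, (hP s a).2, mul_one]
  rw [Finset.sum_congr rfl this, (hρ s).2]

/-- A row-stochastic matrix applied to a vector bounded below stays bounded below. -/
lemma stoch_mulVec_ge {Q : Matrix S S ℝ} (h0 : ∀ s s', 0 ≤ Q s s')
    (h1 : ∀ s, ∑ s', Q s s' = 1) {v : S → ℝ} {m : ℝ} (hv : ∀ s, m ≤ v s) (s : S) :
    m ≤ (Q *ᵥ v) s := by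
  have : (Q *ᵥ v) s = ∑ s', Q s s' * v s' := rfl
  rw [this]
  calc m = ∑ s', Q s s' * m := by rw [← Finset.sum_mul, h1, one_mul]
    _ ≤ ∑ s', Q s s' * v s' :=
      Finset.sum_le_sum fun s' _ => mul_le_mul_of_nonneg_left (hv s') (h0 s s')

/-- A row-stochastic matrix contracts sup-norm bounds. -/
lemma stoch_mulVec_abs_le {Q : Matrix S S ℝ} (h0 : ∀ s s', 0 ≤ Q s s')
    (h1 : ∀ s, ∑ s', Q s s' = 1) {v : S → ℝ} {c : ℝ} (hv : ∀ s, |v s| ≤ c) (s : S) :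
    |(Q *ᵥ v) s| ≤ c := by
  have : (Q *ᵥ v) s = ∑ s', Q s s' * v s' := rfl
  rw [this]
  calc |∑ s', Q s s' * v s'| ≤ ∑ s', |Q s s' * v s'| := Finset.abs_sum_le_sum_abs _ _
    _ ≤ ∑ s', Q s s' * c := by
        refine Finset.sum_le_sum fun s' _ => ?_
        rw [abs_mul, abs_of_nonneg (h0 s s')]
        exact mul_le_mul_of_nonneg_left (hv s') (h0 s s')
    _ = c := by rw [← Finset.sum_mul, h1, one_mul]

/-- `I - γ P_ρ` has unit determinant class (is invertible) when `0 ≤ γ < 1`. -/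
lemma det_isUnit [Nonempty S] {P : S → A → S → ℝ} (hP : IsKernel P) {ρ : S → A → ℝ}
    (hρ : IsPolicy ρ) {γ : ℝ} (hγ0 : 0 ≤ γ) (hγ1 : γ < 1) :
    IsUnit ((1 : Matrix S S ℝ) - γ • PPol P ρ).det := by
  rw [isUnit_iff_ne_zero]
  intro hdet
  obtain ⟨v, hv0, hv⟩ := (Matrix.exists_mulVec_eq_zero_iff).2 hdet
  have hkey : ∀ s, v s = γ * (PPol P ρ *ᵥ v) s := by
    intro s
    have := congrFun hv s
    rw [Matrix.sub_mulVec, Matrix.one_mulVec, Matrix.smul_mulVec] at this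
    have : v s - γ * (PPol P ρ *ᵥ v) s = 0 := this
    linarith
  obtain ⟨s0, -, hs0⟩ := Finset.exists_max_image Finset.univ (fun s => |v s|)
    Finset.univ_nonempty
  have hb : ∀ s, |v s| ≤ |v s0| := fun s => hs0 s (Finset.mem_univ s)
  have : |v s0| ≤ γ * |v s0| := by
    calc |v s0| = γ * |(PPol P ρ *ᵥ v) s0| := by
          rw [hkey s0, abs_mul, abs_of_nonneg hγ0]
      _ ≤ γ * |v s0| := by
          exact mul_le_mul_of_nonneg_left
            (stoch_mulVec_abs_le (PPol_nonneg hP hρ) (PPol_rowsum hP hρ) hb s0) hγ0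
  have hz : |v s0| ≤ 0 := by nlinarith [abs_nonneg (v s0)]
  apply hv0
  funext s
  have := hb s
  have : |v s| ≤ 0 := le_trans this hz
  exact abs_nonpos_iff.mp this

variable [Nonempty S]

/-- `(I - γ P_ρ) v_ρ = r_ρ`. -/
lemma mulVec_valueFn {P : S → A → S → ℝ} (hP : IsKernel P) (r : S → A → ℝ)
    {ρ : S → A → ℝ} (hρ : IsPolicy ρ) {γ : ℝ} (hγ0 : 0 ≤ γ) (hγ1 : γ < 1) :
    ((1 : Matrix S S ℝ) - γ • PPol P ρ) *ᵥ valueFn P r γ ρ = rPol r ρ := by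
  rw [valueFn, Matrix.mulVec_mulVec, Matrix.mul_nonsing_inv _ (det_isUnit hP hρ hγ0 hγ1),
    Matrix.one_mulVec]

/-- `v_ρ` is a fixed point of `T_ρ`. -/
lemma bellman_valueFn {P : S → A → S → ℝ} (hP : IsKernel P) (r : S → A → ℝ)
    {ρ : S → A → ℝ} (hρ : IsPolicy ρ) {γ : ℝ} (hγ0 : 0 ≤ γ) (hγ1 : γ < 1) :
    bellman P r γ ρ (valueFn P r γ ρ) = valueFn P r γ ρ := by
  have h := mulVec_valueFn hP r hρ hγ0 hγ1
  rw [Matrix.sub_mulVec, Matrix.one_mulVec, Matrix.smul_mulVec] at h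
  rw [bellman, ← h]
  abel

/-- Applying `(I - γ P_ρ)⁻¹` preserves nonnegativity. -/
lemma inv_mulVec_nonneg {P : S → A → S → ℝ} (hP : IsKernel P)
    {ρ : S → A → ℝ} (hρ : IsPolicy ρ) {γ : ℝ} (hγ0 : 0 ≤ γ) (hγ1 : γ < 1)
    {x : S → ℝ} (hx : ∀ s, 0 ≤ x s) (s : S) :
    0 ≤ (((1 : Matrix S S ℝ) - γ • PPol P ρ)⁻¹ *ᵥ x) s := by
  set y := ((1 : Matrix S S ℝ) - γ • PPol P ρ)⁻¹ *ᵥ x with hy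
  have hMy : ((1 : Matrix S S ℝ) - γ • PPol P ρ) *ᵥ y = x := by
    rw [hy, Matrix.mulVec_mulVec, Matrix.mul_nonsing_inv _ (det_isUnit hP hρ hγ0 hγ1),
      Matrix.one_mulVec]
  have hrec : ∀ t, y t = x t + γ * (PPol P ρ *ᵥ y) t := by
    intro t
    have := congrFun hMy t
    rw [Matrix.sub_mulVec, Matrix.one_mulVec, Matrix.smul_mulVec] at this
    have h2 : y t - γ * (PPol P ρ *ᵥ y) t = x t := this
    linarith
  obtain ⟨s0, -, hs0⟩ := Finset.exists_min_image Finset.univ y Finset.univ_nonempty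
  have hmin : ∀ t, y s0 ≤ y t := fun t => hs0 t (Finset.mem_univ t)
  have h1 : y s0 ≤ (PPol P ρ *ᵥ y) s0 :=
    stoch_mulVec_ge (PPol_nonneg hP hρ) (PPol_rowsum hP hρ) hmin s0
  have h0 : 0 ≤ y s0 := by nlinarith [hrec s0, hx s0]
  exact le_trans h0 (hmin s)

/-- Entries of `(I - γ P_ρ)⁻¹` are nonnegative. -/
lemma inv_entry_nonneg {P : S → A → S → ℝ} (hP : IsKernel P)
    {ρ : S → A → ℝ} (hρ : IsPolicy ρ) {γ : ℝ} (hγ0 : 0 ≤ γ) (hγ1 : γ < 1) (i j : S) :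
    0 ≤ ((1 : Matrix S S ℝ) - γ • PPol P ρ)⁻¹ i j := by
  have := inv_mulVec_nonneg hP hρ hγ0 hγ1
    (x := Pi.single j 1) (fun s => by
      by_cases h : s = j <;> simp [h, Pi.single_apply]) i
  rw [Matrix.mulVec_single] at this
  simpa using this

/-- Diagonal entries of `(I - γ P_ρ)⁻¹` are at least one. -/
lemma inv_diag_ge_one {P : S → A → S → ℝ} (hP : IsKernel P)
    {ρ : S → A → ℝ} (hρ : IsPolicy ρ) {γ : ℝ} (hγ0 : 0 ≤ γ) (hγ1 : γ < 1) (s : S) :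
    1 ≤ ((1 : Matrix S S ℝ) - γ • PPol P ρ)⁻¹ s s := by
  set B := ((1 : Matrix S S ℝ) - γ • PPol P ρ)⁻¹ with hB
  have hmul : ((1 : Matrix S S ℝ) - γ • PPol P ρ) * B = 1 :=
    Matrix.mul_nonsing_inv _ (det_isUnit hP hρ hγ0 hγ1)
  have h := congrFun (congrFun hmul s) s
  rw [Matrix.sub_mul, Matrix.one_mul, Matrix.smul_mul] at h
  have h1 : B s s - γ * ((PPol P ρ * B) s s) = 1 := by
    simpa using h
  have h2 : 0 ≤ (PPol P ρ * B) s s := by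
    rw [Matrix.mul_apply]
    exact Finset.sum_nonneg fun k _ =>
      mul_nonneg (PPol_nonneg hP hρ s k) (inv_entry_nonneg hP hρ hγ0 hγ1 k s)
  nlinarith

/-- Pointwise formula for the occupancy measure. -/
lemma occ_apply {P : S → A → S → ℝ} {γ : ℝ} {μ : S → ℝ} {ρ : S → A → ℝ} (s : S) :
    occ P γ μ ρ s
      = (1 - γ) * ∑ s', μ s' * ((1 : Matrix S S ℝ) - γ • PPol P ρ)⁻¹ s' s := by
  simp [occ, Matrix.vecMul, dotProduct]

/-- The occupancy measure is nonnegative. -/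
lemma occ_nonneg {P : S → A → S → ℝ} (hP : IsKernel P)
    {ρ : S → A → ℝ} (hρ : IsPolicy ρ) {γ : ℝ} (hγ0 : 0 ≤ γ) (hγ1 : γ < 1)
    {μ : S → ℝ} (hμ : ∀ s, 0 ≤ μ s) (s : S) : 0 ≤ occ P γ μ ρ s := by
  rw [occ_apply]
  refine mul_nonneg (by linarith) (Finset.sum_nonneg fun s' _ =>
    mul_nonneg (hμ s') (inv_entry_nonneg hP hρ hγ0 hγ1 s' s))

/-- The occupancy measure dominates `(1-γ) μ`. -/
lemma occ_ge {P : S → A → S → ℝ} (hP : IsKernel P)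
    {ρ : S → A → ℝ} (hρ : IsPolicy ρ) {γ : ℝ} (hγ0 : 0 ≤ γ) (hγ1 : γ < 1)
    {μ : S → ℝ} (hμ : ∀ s, 0 ≤ μ s) (s : S) : (1 - γ) * μ s ≤ occ P γ μ ρ s := by
  rw [occ_apply]
  have h1 : μ s * 1 ≤ μ s * ((1 : Matrix S S ℝ) - γ • PPol P ρ)⁻¹ s s :=
    mul_le_mul_of_nonneg_left (inv_diag_ge_one hP hρ hγ0 hγ1 s) (hμ s)
  have h2 : μ s * ((1 : Matrix S S ℝ) - γ • PPol P ρ)⁻¹ s s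
      ≤ ∑ s', μ s' * ((1 : Matrix S S ℝ) - γ • PPol P ρ)⁻¹ s' s :=
    Finset.single_le_sum (f := fun s' => μ s' * ((1 : Matrix S S ℝ) - γ • PPol P ρ)⁻¹ s' s)
      (fun s' _ => mul_nonneg (hμ s') (inv_entry_nonneg hP hρ hγ0 hγ1 s' s))
      (Finset.mem_univ s)
  nlinarith

/-- The occupancy measure sums to one. -/
lemma occ_sum {P : S → A → S → ℝ} (hP : IsKernel P)
    {ρ : S → A → ℝ} (hρ : IsPolicy ρ) {γ : ℝ} (hγ0 : 0 ≤ γ) (hγ1 : γ < 1)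
    {μ : S → ℝ} (hμ : ∑ s, μ s = 1) : ∑ s, occ P γ μ ρ s = 1 := by
  have hone : ((1 : Matrix S S ℝ) - γ • PPol P ρ) *ᵥ (fun _ => (1 : ℝ))
      = fun _ => (1 - γ : ℝ) := by
    funext t
    rw [Matrix.sub_mulVec, Matrix.one_mulVec, Matrix.smul_mulVec]
    have : (PPol P ρ *ᵥ fun _ => (1:ℝ)) t = ∑ s', PPol P ρ t s' * 1 := rfl
    simp only [Pi.sub_apply, Pi.smul_apply, smul_eq_mul]
    rw [this]
    simp [PPol_rowsum hP hρ t]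
  have hinv : ∀ s', ∑ s, ((1 : Matrix S S ℝ) - γ • PPol P ρ)⁻¹ s' s = 1 / (1 - γ) := by
    intro s'
    have h1 : ((1 : Matrix S S ℝ) - γ • PPol P ρ)⁻¹
        *ᵥ (((1 : Matrix S S ℝ) - γ • PPol P ρ) *ᵥ (fun _ => (1:ℝ))) = fun _ => (1:ℝ) := by
      rw [Matrix.mulVec_mulVec, Matrix.nonsing_inv_mul _ (det_isUnit hP hρ hγ0 hγ1),
        Matrix.one_mulVec]
    rw [hone] at h1
    have h2 := congrFun h1 s'
    have h3 : ∑ s, ((1 : Matrix S S ℝ) - γ • PPol P ρ)⁻¹ s' s * (1 - γ) = 1 := h2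
    rw [← Finset.sum_mul] at h3
    rw [eq_div_iff (by linarith : (1:ℝ) - γ ≠ 0)]
    linarith
  calc ∑ s, occ P γ μ ρ s
      = (1 - γ) * ∑ s, ∑ s', μ s' * ((1 : Matrix S S ℝ) - γ • PPol P ρ)⁻¹ s' s := by
        rw [Finset.mul_sum]; exact Finset.sum_congr rfl fun s _ => occ_apply s
    _ = (1 - γ) * ∑ s', μ s' * (1 / (1 - γ)) := by
        rw [Finset.sum_comm]
        congr 1
        exact Finset.sum_congr rfl fun s' _ => by rw [← Finset.mul_sum, hinv s']
    _ = 1 := by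
        rw [← Finset.sum_mul, hμ, one_mul]
        rw [mul_one_div]
        exact div_self (by linarith)

/-- Pointwise formula for the Bellman operator. -/
lemma bellman_eq (P : S → A → S → ℝ) (r : S → A → ℝ) (γ : ℝ) (ρ : S → A → ℝ)
    (v : S → ℝ) (s : S) :
    bellman P r γ ρ v s = ∑ a, ρ s a * (r s a + γ * ∑ s', P s a s' * v s') := by
  have h1 : (PPol P ρ *ᵥ v) s = ∑ s', (∑ a, ρ s a * P s a s') * v s' := rfl
  simp only [bellman, Pi.add_apply, Pi.smul_apply, smul_eq_mul, rPol, h1]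
  simp only [mul_add, Finset.sum_add_distrib]
  congr 1
  · rw [Finset.mul_sum]
    have h2 : ∀ i, γ * ((∑ a, ρ s a * P s a i) * v i)
        = ∑ a, γ * (ρ s a * P s a i * v i) := by
      intro i; rw [Finset.sum_mul, Finset.mul_sum]
    rw [Finset.sum_congr rfl fun i _ => h2 i, Finset.sum_comm]
    refine Finset.sum_congr rfl fun a _ => ?_
    rw [Finset.mul_sum, Finset.mul_sum]
    exact Finset.sum_congr rfl fun s' _ => by ring

/-- `T_ρ v ≤ T v` pointwise. -/
lemma bellman_le_opt [Nonempty A] (P : S → A → S → ℝ) (r : S → A → ℝ) {γ : ℝ}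
    {ρ : S → A → ℝ} (hρ : IsPolicy ρ) (v : S → ℝ) (s : S) :
    bellman P r γ ρ v s ≤ optBellman P r γ v s := by
  rw [bellman_eq]
  calc ∑ a, ρ s a * (r s a + γ * ∑ s', P s a s' * v s')
      ≤ ∑ a, ρ s a * optBellman P r γ v s := by
        refine Finset.sum_le_sum fun a _ => mul_le_mul_of_nonneg_left ?_ ((hρ s).1 a)
        exact Finset.le_sup' (fun a => r s a + γ * ∑ s', P s a s' * v s')
          (Finset.mem_univ a)
    _ = _ := by rw [← Finset.sum_mul, (hρ s).2, one_mul]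

/-- Upper bound for the optimal Bellman operator. -/
lemma optBellman_le [Nonempty A] {P : S → A → S → ℝ} (hP : IsKernel P)
    {r : S → A → ℝ} {γ : ℝ} (hγ0 : 0 ≤ γ) {v : S → ℝ} {b c : ℝ}
    (hr : ∀ s a, |r s a| ≤ c) (hv : ∀ s, |v s| ≤ b) (s : S) :
    optBellman P r γ v s ≤ c + γ * b := by
  simp only [optBellman]
  refine Finset.sup'_le _ _ fun a _ => ?_
  have h1 : ∑ s', P s a s' * v s' ≤ b := by
    calc ∑ s', P s a s' * v s' ≤ ∑ s', P s a s' * b :=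
          Finset.sum_le_sum fun s' _ => mul_le_mul_of_nonneg_left
            (le_trans (le_abs_self _) (hv s')) ((hP s a).1 s')
      _ = b := by rw [← Finset.sum_mul, (hP s a).2, one_mul]
  have h2 : r s a ≤ c := le_trans (le_abs_self _) (hr s a)
  nlinarith

/-- Lower bound for the Bellman operator of a policy. -/
lemma bellman_ge [Nonempty A] {P : S → A → S → ℝ} (hP : IsKernel P)
    {r : S → A → ℝ} {γ : ℝ} (hγ0 : 0 ≤ γ) {ρ : S → A → ℝ} (hρ : IsPolicy ρ)
    {v : S → ℝ} {b c : ℝ} (hr : ∀ s a, |r s a| ≤ c) (hv : ∀ s, |v s| ≤ b) (s : S) :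
    -(c + γ * b) ≤ bellman P r γ ρ v s := by
  rw [bellman_eq]
  calc -(c + γ * b) = ∑ a, ρ s a * (-(c + γ * b)) := by
        rw [← Finset.sum_mul, (hρ s).2, one_mul]
    _ ≤ ∑ a, ρ s a * (r s a + γ * ∑ s', P s a s' * v s') := by
        refine Finset.sum_le_sum fun a _ => mul_le_mul_of_nonneg_left ?_ ((hρ s).1 a)
        have h1 : -b ≤ ∑ s', P s a s' * v s' := by
          have hh : ∑ s', P s a s' * (-b) ≤ ∑ s', P s a s' * v s' :=
            Finset.sum_le_sum fun s' _ => mul_le_mul_of_nonneg_left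
              (neg_le_of_abs_le (hv s')) ((hP s a).1 s')
          rw [← Finset.sum_mul, (hP s a).2, one_mul] at hh
          linarith
        have h2 : -c ≤ r s a := neg_le_of_abs_le (hr s a)
        nlinarith

/-- Sup-norm bound for the value function. -/
lemma valueFn_abs_le {P : S → A → S → ℝ} (hP : IsKernel P) {r : S → A → ℝ}
    {ρ : S → A → ℝ} (hρ : IsPolicy ρ) {γ : ℝ} (hγ0 : 0 ≤ γ) (hγ1 : γ < 1)
    {c : ℝ} (hr : ∀ s a, |r s a| ≤ c) (s : S) :
    |valueFn P r γ ρ s| ≤ c / (1 - γ) := by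
  set v := valueFn P r γ ρ with hv
  obtain ⟨s0, -, hs0⟩ := Finset.exists_max_image Finset.univ (fun s => |v s|)
    Finset.univ_nonempty
  have hb : ∀ t, |v t| ≤ |v s0| := fun t => hs0 t (Finset.mem_univ t)
  have hfix : v s0 = ∑ a, ρ s0 a * (r s0 a + γ * ∑ s', P s0 a s' * v s') := by
    have h := congrFun (bellman_valueFn hP r hρ hγ0 hγ1) s0
    rw [← hv] at h
    rw [← h, bellman_eq]
  have hkey : |v s0| ≤ c + γ * |v s0| := by
    calc |v s0| = |∑ a, ρ s0 a * (r s0 a + γ * ∑ s', P s0 a s' * v s')| := by rw [← hfix]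
      _ ≤ ∑ a, |ρ s0 a * (r s0 a + γ * ∑ s', P s0 a s' * v s')| :=
          Finset.abs_sum_le_sum_abs _ _
      _ ≤ ∑ a, ρ s0 a * (c + γ * |v s0|) := by
          refine Finset.sum_le_sum fun a _ => ?_
          rw [abs_mul, abs_of_nonneg ((hρ s0).1 a)]
          refine mul_le_mul_of_nonneg_left ?_ ((hρ s0).1 a)
          have h1 : |∑ s', P s0 a s' * v s'| ≤ |v s0| := by
            calc |∑ s', P s0 a s' * v s'| ≤ ∑ s', |P s0 a s' * v s'| :=
                  Finset.abs_sum_le_sum_abs _ _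
              _ ≤ ∑ s', P s0 a s' * |v s0| := by
                  refine Finset.sum_le_sum fun s' _ => ?_
                  rw [abs_mul, abs_of_nonneg ((hP s0 a).1 s')]
                  exact mul_le_mul_of_nonneg_left (hb s') ((hP s0 a).1 s')
              _ = |v s0| := by rw [← Finset.sum_mul, (hP s0 a).2, one_mul]
          calc |r s0 a + γ * ∑ s', P s0 a s' * v s'|
              ≤ |r s0 a| + |γ * ∑ s', P s0 a s' * v s'| := abs_add_le _ _
            _ ≤ c + γ * |v s0| := by
                rw [abs_mul, abs_of_nonneg hγ0]
                exact add_le_add (hr s0 a) (mul_le_mul_of_nonneg_left h1 hγ0)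
      _ = c + γ * |v s0| := by rw [← Finset.sum_mul, (hρ s0).2, one_mul]
  have h0 : |v s0| ≤ c / (1 - γ) := by
    rw [le_div_iff₀ (by linarith : (0:ℝ) < 1 - γ)]
    nlinarith
  exact le_trans (hb s) h0

/-- A mixture of two policies is a policy. -/
lemma mix_policy {π π' : S → A → ℝ} (hπ : IsPolicy π) (hπ' : IsPolicy π')
    {α : ℝ} (hα0 : 0 ≤ α) (hα1 : α ≤ 1) : IsPolicy (mix α π π') := by
  intro s
  constructor
  · intro a
    exact add_nonneg (mul_nonneg (by linarith) ((hπ s).1 a))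
      (mul_nonneg hα0 ((hπ' s).1 a))
  · have : ∑ a, mix α π π' s a = (1 - α) * ∑ a, π s a + α * ∑ a, π' s a := by
      simp [mix, Finset.sum_add_distrib, Finset.mul_sum]
    rw [this, (hπ s).2, (hπ' s).2]
    ring

lemma rPol_mix (r : S → A → ℝ) (π π' : S → A → ℝ) (α : ℝ) :
    rPol r (mix α π π') = (1 - α) • rPol r π + α • rPol r π' := by
  funext s
  simp only [rPol, Pi.add_apply, Pi.smul_apply, smul_eq_mul, mix]
  rw [Finset.mul_sum, Finset.mul_sum, ← Finset.sum_add_distrib]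
  exact Finset.sum_congr rfl fun a _ => by ring

lemma PPol_mix (P : S → A → S → ℝ) (π π' : S → A → ℝ) (α : ℝ) :
    PPol P (mix α π π') = (1 - α) • PPol P π + α • PPol P π' := by
  ext s s'
  simp only [PPol, Matrix.of_apply, Matrix.add_apply, Matrix.smul_apply, smul_eq_mul, mix]
  rw [Finset.mul_sum, Finset.mul_sum, ← Finset.sum_add_distrib]
  exact Finset.sum_congr rfl fun a _ => by ring

lemma bellman_mix (P : S → A → S → ℝ) (r : S → A → ℝ) (γ : ℝ) (π π' : S → A → ℝ)
    (α : ℝ) (v : S → ℝ) :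
    bellman P r γ (mix α π π') v
      = (1 - α) • bellman P r γ π v + α • bellman P r γ π' v := by
  simp only [bellman, rPol_mix, PPol_mix, Matrix.add_mulVec, Matrix.smul_mulVec]
  module

/-- Performance-difference identity. -/
lemma valueFn_sub {P : S → A → S → ℝ} (hP : IsKernel P) (r : S → A → ℝ)
    {ρ : S → A → ℝ} (hρ : IsPolicy ρ) {γ : ℝ} (hγ0 : 0 ≤ γ) (hγ1 : γ < 1) (u : S → ℝ) :
    valueFn P r γ ρ - u
      = ((1 : Matrix S S ℝ) - γ • PPol P ρ)⁻¹ *ᵥ (bellman P r γ ρ u - u) := by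
  have h1 : bellman P r γ ρ u - u
      = rPol r ρ - ((1 : Matrix S S ℝ) - γ • PPol P ρ) *ᵥ u := by
    rw [bellman, Matrix.sub_mulVec, Matrix.one_mulVec, Matrix.smul_mulVec]
    abel
  rw [h1, Matrix.mulVec_sub, Matrix.mulVec_mulVec,
    Matrix.nonsing_inv_mul _ (det_isUnit hP hρ hγ0 hγ1), Matrix.one_mulVec, valueFn]

/-- Uniqueness of the optimal fixed point. -/
lemma opt_fixed_unique [Nonempty A] {P : S → A → S → ℝ} (hP : IsKernel P)
    (r : S → A → ℝ) {γ : ℝ} (hγ0 : 0 ≤ γ) (hγ1 : γ < 1) {v w : S → ℝ}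
    (hv : v = optBellman P r γ v) (hw : w = optBellman P r γ w) : v = w := by
  obtain ⟨s0, -, hs0⟩ := Finset.exists_max_image Finset.univ (fun s => |v s - w s|)
    Finset.univ_nonempty
  set m := |v s0 - w s0| with hm
  have hb : ∀ s, |v s - w s| ≤ m := fun s => hs0 s (Finset.mem_univ s)
  have hsum : ∀ s a, ∑ s', P s a s' * v s' ≤ (∑ s', P s a s' * w s') + m := by
    intro s a
    have : ∑ s', P s a s' * v s' - ∑ s', P s a s' * w s'
        = ∑ s', P s a s' * (v s' - w s') := by
      rw [← Finset.sum_sub_distrib]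
      exact Finset.sum_congr rfl fun s' _ => by ring
    have h2 : ∑ s', P s a s' * (v s' - w s') ≤ m := by
      calc ∑ s', P s a s' * (v s' - w s') ≤ ∑ s', P s a s' * m :=
            Finset.sum_le_sum fun s' _ => mul_le_mul_of_nonneg_left
              (le_trans (le_abs_self _) (hb s')) ((hP s a).1 s')
        _ = m := by rw [← Finset.sum_mul, (hP s a).2, one_mul]
    linarith
  have key : ∀ x y : S → ℝ, (∀ s a, ∑ s', P s a s' * x s' ≤ (∑ s', P s a s' * y s') + m) →
      ∀ s, optBellman P r γ x s ≤ optBellman P r γ y s + γ * m := by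
    intro x y hxy s
    have h1 : ∀ a, r s a + γ * ∑ s', P s a s' * y s' ≤ optBellman P r γ y s :=
      fun a => Finset.le_sup' (fun a => r s a + γ * ∑ s', P s a s' * y s')
        (Finset.mem_univ a)
    show Finset.univ.sup' Finset.univ_nonempty
      (fun a => r s a + γ * ∑ s', P s a s' * x s') ≤ _
    refine Finset.sup'_le _ _ fun a _ => ?_
    have h2 := hxy s a
    have h3 := h1 a
    nlinarith
  have hsum' : ∀ s a, ∑ s', P s a s' * w s' ≤ (∑ s', P s a s' * v s') + m := by
    intro s a
    have : ∑ s', P s a s' * w s' - ∑ s', P s a s' * v s'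
        = ∑ s', P s a s' * (w s' - v s') := by
      rw [← Finset.sum_sub_distrib]
      exact Finset.sum_congr rfl fun s' _ => by ring
    have h2 : ∑ s', P s a s' * (w s' - v s') ≤ m := by
      calc ∑ s', P s a s' * (w s' - v s') ≤ ∑ s', P s a s' * m := by
            refine Finset.sum_le_sum fun s' _ => mul_le_mul_of_nonneg_left ?_ ((hP s a).1 s')
            calc w s' - v s' ≤ |w s' - v s'| := le_abs_self _
              _ = |v s' - w s'| := abs_sub_comm _ _
              _ ≤ m := hb s'
        _ = m := by rw [← Finset.sum_mul, (hP s a).2, one_mul]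
    linarith
  have h1 : v s0 ≤ w s0 + γ * m := by
    rw [hv, hw]
    exact key v w hsum s0
  have h2 : w s0 ≤ v s0 + γ * m := by
    rw [hv, hw]
    exact key w v hsum' s0
  have hmle : m ≤ γ * m := abs_le.mpr ⟨by linarith, by linarith⟩
  have hm0 : 0 ≤ m := abs_nonneg _
  have : m ≤ 0 := by nlinarith
  funext s
  have := le_trans (hb s) this
  have := abs_nonpos_iff.mp this
  linarith [sub_eq_zero.mp this]

lemma mix_zero (π π' : S → A → ℝ) : mix (0:ℝ) π π' = π := by
  funext s a; simp [mix]

/-- The one-sided derivative of `α ↦ ν ⬝ᵥ v_{(1-α)π+απ'}` at `0`. -/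
lemma deriv_limit {P : S → A → S → ℝ} (hP : IsKernel P) (r : S → A → ℝ)
    {γ : ℝ} (hγ0 : 0 ≤ γ) (hγ1 : γ < 1) (ν : S → ℝ)
    {π π' : S → A → ℝ} (hπ : IsPolicy π) (hπ' : IsPolicy π') :
    Filter.Tendsto (fun α : ℝ =>
        (ν ⬝ᵥ valueFn P r γ (mix α π π') - ν ⬝ᵥ valueFn P r γ π) / α)
      (nhdsWithin 0 (Set.Ioi 0))
      (nhds (ν ⬝ᵥ (((1 : Matrix S S ℝ) - γ • PPol P π)⁻¹ *ᵥ
          (bellman P r γ π' (valueFn P r γ π) - valueFn P r γ π)))) := by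
  have hNcont : Continuous (fun α : ℝ =>
      (1 : Matrix S S ℝ) - γ • PPol P (mix α π π')) := by
    apply continuous_matrix
    intro i j
    simp only [Matrix.sub_apply, Matrix.one_apply, Matrix.smul_apply, PPol,
      Matrix.of_apply, smul_eq_mul, mix]
    refine continuous_const.sub (continuous_const.mul
      (continuous_finset_sum _ fun a _ => ?_))
    exact ((continuous_const.sub continuous_id).mul continuous_const |>.add
      (continuous_id.mul continuous_const)).mul continuous_const
  have hN0 : (fun α : ℝ => (1 : Matrix S S ℝ) - γ • PPol P (mix α π π')) 0
      = (1 : Matrix S S ℝ) - γ • PPol P π := by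
    simp only [mix_zero]
  have hdet0 : ((fun α : ℝ => (1 : Matrix S S ℝ) - γ • PPol P (mix α π π')) 0).det ≠ 0 := by
    rw [hN0]
    exact (det_isUnit hP hπ hγ0 hγ1).ne_zero
  have hinv_eq : (fun α : ℝ => ((1 : Matrix S S ℝ) - γ • PPol P (mix α π π'))⁻¹)
      = fun α : ℝ => ((1 : Matrix S S ℝ) - γ • PPol P (mix α π π')).det⁻¹
          • ((1 : Matrix S S ℝ) - γ • PPol P (mix α π π')).adjugate := by
    funext α
    rw [Matrix.inv_def, Ring.inverse_eq_inv']
  have hinvcont : ContinuousAt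
      (fun α : ℝ => ((1 : Matrix S S ℝ) - γ • PPol P (mix α π π'))⁻¹) 0 := by
    rw [hinv_eq]
    exact ContinuousAt.smul (hNcont.matrix_det.continuousAt.inv₀ hdet0)
      hNcont.matrix_adjugate.continuousAt
  set w := bellman P r γ π' (valueFn P r γ π) - valueFn P r γ π with hw
  have hdotcont : Continuous (fun M : Matrix S S ℝ => ν ⬝ᵥ (M *ᵥ w)) := by
    simp only [dotProduct, Matrix.mulVec]
    refine continuous_finset_sum _ fun i _ => Continuous.mul continuous_const
      (continuous_finset_sum _ fun j _ => ?_)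
    exact (continuous_id.matrix_elem i j).mul continuous_const
  have hg : ContinuousAt (fun α : ℝ =>
      ν ⬝ᵥ (((1 : Matrix S S ℝ) - γ • PPol P (mix α π π'))⁻¹ *ᵥ w)) 0 :=
    hdotcont.continuousAt.comp hinvcont
  have htend : Filter.Tendsto (fun α : ℝ =>
      ν ⬝ᵥ (((1 : Matrix S S ℝ) - γ • PPol P (mix α π π'))⁻¹ *ᵥ w))
      (nhdsWithin 0 (Set.Ioi 0))
      (nhds (ν ⬝ᵥ (((1 : Matrix S S ℝ) - γ • PPol P π)⁻¹ *ᵥ w))) := by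
    have h := hg.tendsto.mono_left (nhdsWithin_le_nhds (s := Set.Ioi (0:ℝ)))
    simpa only [mix_zero] using h
  have heq : ∀ α ∈ Set.Ioo (0:ℝ) 1,
      ν ⬝ᵥ (((1 : Matrix S S ℝ) - γ • PPol P (mix α π π'))⁻¹ *ᵥ w)
        = (ν ⬝ᵥ valueFn P r γ (mix α π π') - ν ⬝ᵥ valueFn P r γ π) / α := by
    intro α hα
    have hpol : IsPolicy (mix α π π') := mix_policy hπ hπ' (le_of_lt hα.1) (le_of_lt hα.2)
    have hsub : valueFn P r γ (mix α π π') - valueFn P r γ π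
        = ((1 : Matrix S S ℝ) - γ • PPol P (mix α π π'))⁻¹
            *ᵥ (bellman P r γ (mix α π π') (valueFn P r γ π) - valueFn P r γ π) :=
      valueFn_sub hP r hpol hγ0 hγ1 _
    have hbm : bellman P r γ (mix α π π') (valueFn P r γ π) - valueFn P r γ π
        = α • w := by
      rw [bellman_mix, bellman_valueFn hP r hπ hγ0 hγ1, hw]
      module
    rw [show ν ⬝ᵥ valueFn P r γ (mix α π π') - ν ⬝ᵥ valueFn P r γ π
        = ν ⬝ᵥ (valueFn P r γ (mix α π π') - valueFn P r γ π) from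
      (dotProduct_sub ν _ _).symm, hsub, hbm, Matrix.mulVec_smul,
      dotProduct_smul, smul_eq_mul, mul_comm, mul_div_assoc,
      div_self (ne_of_gt hα.1), mul_one]
  have hmem : Set.Ioo (0:ℝ) 1 ∈ nhdsWithin (0:ℝ) (Set.Ioi 0) :=
    Ioo_mem_nhdsGT_of_mem (by constructor <;> norm_num)
  exact Filter.Tendsto.congr'
    (Filter.eventuallyEq_of_mem hmem fun α hα => heq α hα) htend

/-- Dot product with the occupancy measure, via the resolvent. -/
lemma occ_dot {P : S → A → S → ℝ} (γ : ℝ) (ν : S → ℝ) (ρ : S → A → ℝ) (x : S → ℝ) :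
    occ P γ ν ρ ⬝ᵥ x
      = (1 - γ) * (ν ⬝ᵥ (((1 : Matrix S S ℝ) - γ • PPol P ρ)⁻¹ *ᵥ x)) := by
  rw [occ, smul_dotProduct, ← Matrix.dotProduct_mulVec, smul_eq_mul]

end Aux

/-- if `ν > 0`, the policy space is rich (`E_ν(Π) = 0`) and `π` is an exact
local optimum of `J_ν` over the convex set `Π`, then `v_π = v_*`. -/
theorem stmt_7 {S A : Type*} [Fintype S] [Fintype A] [Nonempty S] [Nonempty A] [DecidableEq S]
    (P : S → A → S → ℝ) (hP : IsKernel P) (r : S → A → ℝ) (γ : ℝ)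
    (hγ0 : 0 ≤ γ) (hγ1 : γ < 1)
    (Pol : Set (S → A → ℝ)) (hPol : ∀ ρ ∈ Pol, IsPolicy ρ)
    (hconv : ∀ ρ ∈ Pol, ∀ ρ' ∈ Pol, ∀ α : ℝ, 0 ≤ α → α ≤ 1 → mix α ρ ρ' ∈ Pol)
    (ν : S → ℝ) (hν : IsDist ν) (hνpos : ∀ s, 0 < ν s)
    (hrich : greedyCplx P r γ ν Pol = 0)
    (π : S → A → ℝ) (hπ : π ∈ Pol)
    (hloc : IsLocalOpt P r γ ν Pol π 0)
    (vstar : S → ℝ) (hvstar : vstar = optBellman P r γ vstar) :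
    valueFn P r γ π = vstar := by
  classical
  have hπpol : IsPolicy π := hPol π hπ
  set v := valueFn P r γ π with hv
  have hγpos : (0:ℝ) < 1 - γ := by linarith
  -- Step 1: exact local optimality gives nonpositive directional derivatives.
  have hgrad : ∀ π' ∈ Pol,
      ν ⬝ᵥ (((1 : Matrix S S ℝ) - γ • PPol P π)⁻¹
        *ᵥ (bellman P r γ π' v - v)) ≤ 0 := by
    intro π' hπ'
    obtain ⟨L, hL0, hLt⟩ := hloc π' hπ'
    have hD := deriv_limit hP r hγ0 hγ1 ν hπpol (hPol π' hπ')
    have := tendsto_nhds_unique hLt hD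
    rw [← this]
    exact hL0
  have hoccle : ∀ π' ∈ Pol, occ P γ ν π ⬝ᵥ (bellman P r γ π' v - v) ≤ 0 := by
    intro π' hπ'
    rw [occ_dot]
    have := hgrad π' hπ'
    nlinarith
  -- Step 2: richness gives near-greedy policies.
  haveI : Nonempty ↥Pol := ⟨⟨π, hπ⟩⟩
  set g : ↥Pol → ↥Pol → ℝ := fun ρ ρ' =>
    occ P γ ν (ρ : S → A → ℝ) ⬝ᵥ
      (optBellman P r γ (valueFn P r γ (ρ : S → A → ℝ)) -
        bellman P r γ (ρ' : S → A → ℝ) (valueFn P r γ (ρ : S → A → ℝ))) with hg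
  have hgnonneg : ∀ ρ ρ' : ↥Pol, 0 ≤ g ρ ρ' := by
    intro ρ ρ'
    refine Finset.sum_nonneg fun s _ => mul_nonneg
      (occ_nonneg hP (hPol _ ρ.2) hγ0 hγ1 (fun s => (hνpos s).le) s) ?_
    have := bellman_le_opt (γ := γ) P r (hPol _ ρ'.2) (valueFn P r γ (ρ : S → A → ℝ)) s
    simpa using sub_nonneg.mpr this
  -- a uniform bound on rewards
  obtain ⟨s₀⟩ := (inferInstance : Nonempty S)
  obtain ⟨a₀⟩ := (inferInstance : Nonempty A)
  set c : ℝ := Finset.univ.sup' Finset.univ_nonempty (fun p : S × A => |r p.1 p.2|) with hc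
  have hr : ∀ s a, |r s a| ≤ c := fun s a =>
    Finset.le_sup' (fun p : S × A => |r p.1 p.2|) (Finset.mem_univ (s, a))
  have hc0 : 0 ≤ c := le_trans (abs_nonneg _) (hr s₀ a₀)
  set C : ℝ := c + γ * (c / (1 - γ)) + c / (1 - γ) with hC
  have hgC : ∀ ρ : ↥Pol, g ρ ρ ≤ C := by
    intro ρ
    have hρ := hPol _ ρ.2
    have hub : ∀ s, optBellman P r γ (valueFn P r γ (ρ : S → A → ℝ)) s -
        bellman P r γ (ρ : S → A → ℝ) (valueFn P r γ (ρ : S → A → ℝ)) s ≤ C := by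
      intro s
      have h1 := optBellman_le hP hγ0 hr (valueFn_abs_le hP hρ hγ0 hγ1 hr) s
      have h2 := congrFun (bellman_valueFn hP r hρ hγ0 hγ1) s
      have h3 := valueFn_abs_le hP hρ hγ0 hγ1 hr s
      have h4 : -(c / (1 - γ)) ≤ valueFn P r γ (ρ : S → A → ℝ) s := neg_le_of_abs_le h3
      rw [h2]
      simp only [hC]
      linarith
    calc g ρ ρ ≤ ∑ s, occ P γ ν (ρ : S → A → ℝ) s * C := by
          refine Finset.sum_le_sum fun s _ => mul_le_mul_of_nonneg_left (hub s)
            (occ_nonneg hP hρ hγ0 hγ1 (fun s => (hνpos s).le) s)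
      _ = C := by
          rw [← Finset.sum_mul, occ_sum hP hρ hγ0 hγ1 hν.2, one_mul]
  set F : ↥Pol → ℝ := fun ρ => ⨅ ρ' : ↥Pol, g ρ ρ' with hF
  have hFle : ∀ ρ, F ρ ≤ C := by
    intro ρ
    exact le_trans (ciInf_le ⟨0, by rintro x ⟨ρ', rfl⟩; exact hgnonneg ρ ρ'⟩ ρ) (hgC ρ)
  have hrich' : (⨆ ρ : ↥Pol, F ρ) = 0 := hrich
  have hFπ : F ⟨π, hπ⟩ ≤ 0 := by
    rw [← hrich']
    exact le_ciSup ⟨C, by rintro x ⟨ρ, rfl⟩; exact hFle ρ⟩ _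
  -- Step 3: combine
  have hkey : ∀ ε : ℝ, 0 < ε → occ P γ ν π ⬝ᵥ (optBellman P r γ v - v) < ε := by
    intro ε hε
    have : F ⟨π, hπ⟩ < ε := lt_of_le_of_lt hFπ hε
    obtain ⟨ρ', hρ'⟩ := exists_lt_of_ciInf_lt this
    have hsplit : occ P γ ν π ⬝ᵥ (optBellman P r γ v - v)
        = g ⟨π, hπ⟩ ρ' + occ P γ ν π ⬝ᵥ (bellman P r γ (ρ' : S → A → ℝ) v - v) := by
      rw [hg, ← dotProduct_add]
      congr 1
      funext s
      simp only [Pi.add_apply, Pi.sub_apply]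
      ring
    rw [hsplit]
    have := hoccle (ρ' : S → A → ℝ) ρ'.2
    linarith
  have hle0 : occ P γ ν π ⬝ᵥ (optBellman P r γ v - v) ≤ 0 := by
    by_contra h
    push_neg at h
    exact absurd (hkey _ h) (lt_irrefl _)
  -- Step 4: pointwise conclusion
  have hopt : v = optBellman P r γ v := by
    funext s
    by_contra hne
    have hub : 0 ≤ optBellman P r γ v s - v s := by
      have h2 := congrFun (bellman_valueFn hP r hπpol hγ0 hγ1) s
      have := bellman_le_opt (γ := γ) P r hπpol v s
      rw [h2] at this
      linarith
    have hlt : 0 < optBellman P r γ v s - v s :=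
      lt_of_le_of_ne hub (by intro h; exact hne (by linarith))
    have hpos : 0 < occ P γ ν π s * (optBellman P r γ v s - v s) := by
      have h5 := occ_ge hP hπpol hγ0 hγ1 (fun s => (hνpos s).le) s
      have h6 : 0 < occ P γ ν π s := lt_of_lt_of_le (mul_pos hγpos (hνpos s)) h5
      exact mul_pos h6 hlt
    have hsum : occ P γ ν π s * (optBellman P r γ v s - v s)
        ≤ occ P γ ν π ⬝ᵥ (optBellman P r γ v - v) := by
      refine Finset.single_le_sum (f := fun t => occ P γ ν π t *
        (optBellman P r γ v t - v t)) (fun t _ => mul_nonneg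
          (occ_nonneg hP hπpol hγ0 hγ1 (fun s => (hνpos s).le) t) ?_)
        (Finset.mem_univ s)
      have h2 := congrFun (bellman_valueFn hP r hπpol hγ0 hγ1) t
      have := bellman_le_opt (γ := γ) P r hπpol v t
      rw [h2] at this
      linarith
    linarith
  exact opt_fixed_unique hP r hγ0 hγ1 hopt hvstar
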